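/- Under the same hypotheses as the preceding Lagrange-form lemma (x* > 0 componentwise with sum s*, satisfying A^E x* = b^E, binding rows A^{BI} x* = b^{BI}, multipliers λ^E and λ^{BI} ≥ 0 with x*_j = s*·exp(−(λ^E·A^E_{·j} + λ^{BI}·A^{BI}_{·j})), G* = G(x*), χ* = x*/s*, Λ* = |λ^E|·|b^E| + λ^{BI}·|b^{BI}|), define β* = max over subsets I ⊆ {1,…,m} of min( Σ_{i∈I} χ*_i , 1 − Σ_{i∈I} χ*_i ), and γ* = (1/(4(1−2β*)))·ln((1−β*)/β*) when β* < 1/2, with γ* = 1/2 when β* = 1/2. Then γ* ≥ 1/2 and (1 − max_i χ*_i)/2 ≤ β* ≤ 1/2; and for every δ ≥ 0, ϑ > 0, and every count vector ν ∈ ℕ^m satisfying the δ-relaxed constraints (b^E − δ|b^E| ≤ A^E ν ≤ b^E + δ|b^E|, A^I ν ≤ b^I + δ|b^I|) with n = Σ_i ν_i: if ‖ν − x*‖₁ > |n − s*| + min(n, s*)·ϑ, then G(ν) ≤ G* + Λ*·δ − γ*·ϑ²·n. -/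

import Mathlib

set_option maxHeartbeats 1000000

open scoped BigOperators



/-- the OW constant function -/
noncomputable def owPhi (x : ℝ) : ℝ :=
  if x = 1/2 then 2 else (Real.log (1-x) - Real.log x) / (1 - 2*x)

private lemma hasDerivAt_log_one_sub {x : ℝ} (hx : x ≠ 1) :
    HasDerivAt (fun y : ℝ => Real.log (1 - y)) (-(1-x)⁻¹) x := by
  have h1 : HasDerivAt (fun y : ℝ => 1 - y) (-1) x := by
    simpa [Pi.sub_def] using (hasDerivAt_const x (1:ℝ)).sub (hasDerivAt_id x)
  have h2 := (Real.hasDerivAt_log (x := 1 - x) (by intro h; apply hx; linarith)).comp x h1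
  simpa [Function.comp_def] using h2

private lemma hasDerivAt_log_one_add {x : ℝ} (hx : x ≠ -1) :
    HasDerivAt (fun y : ℝ => Real.log (1 + y)) ((1+x)⁻¹) x := by
  have h1 : HasDerivAt (fun y : ℝ => 1 + y) 1 x := by
    simpa [Pi.add_def] using (hasDerivAt_const x (1:ℝ)).add (hasDerivAt_id x)
  have h2 := (Real.hasDerivAt_log (x := 1 + x) (by intro h; apply hx; linarith)).comp x h1
  simpa [Function.comp_def] using h2

/-- F1 : `2t ≤ log(1+t) - log(1-t)` on `[0,1)` -/
lemma owF1 {t : ℝ} (ht0 : 0 ≤ t) (ht1 : t < 1) :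
    2*t ≤ Real.log (1+t) - Real.log (1-t) := by
  set h : ℝ → ℝ := fun t => Real.log (1+t) - Real.log (1-t) - 2*t with hh
  have hder : ∀ x ∈ Set.Ico (0:ℝ) 1, HasDerivAt h ((1+x)⁻¹ + (1-x)⁻¹ - 2) x := by
    intro x hx
    obtain ⟨hx0, hx1⟩ := hx
    have := ((hasDerivAt_log_one_add (by linarith)).sub
      (hasDerivAt_log_one_sub (by linarith))).sub ((hasDerivAt_id x).const_mul 2)
    exact this.congr_deriv (by ring)
  have hmono : MonotoneOn h (Set.Ico (0:ℝ) 1) := by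
    apply monotoneOn_of_deriv_nonneg (convex_Ico 0 1)
    · intro x hx; exact (hder x hx).continuousAt.continuousWithinAt
    · intro x hx
      rw [interior_Ico] at hx
      exact ((hder x ⟨le_of_lt hx.1, hx.2⟩).differentiableAt).differentiableWithinAt
    · intro x hx
      rw [interior_Ico] at hx
      rw [(hder x ⟨le_of_lt hx.1, hx.2⟩).deriv]
      obtain ⟨hx0, hx1⟩ := hx
      have h1 : (0:ℝ) < 1 + x := by linarith
      have h2 : (0:ℝ) < 1 - x := by linarith
      have he : (1+x)⁻¹ + (1-x)⁻¹ - 2 = (2*x^2) / ((1+x)*(1-x)) := by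
        field_simp; ring
      rw [he]; positivity
  have h0 : h 0 = 0 := by simp [hh]
  have := hmono (Set.mem_Ico.2 ⟨le_refl 0, by norm_num⟩) (Set.mem_Ico.2 ⟨ht0, ht1⟩) ht0
  rw [h0] at this
  simp only [hh] at this
  linarith

/-- F2 : `log(1+t) - log(1-t) ≤ 2t/(1-t²)` on `[0,1)` -/
lemma owF2 {t : ℝ} (ht0 : 0 ≤ t) (ht1 : t < 1) :
    Real.log (1+t) - Real.log (1-t) ≤ 2*t/(1-t^2) := by
  set h : ℝ → ℝ := fun t => 2*t/(1-t^2) - (Real.log (1+t) - Real.log (1-t)) with hh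
  have hder : ∀ x ∈ Set.Ico (0:ℝ) 1,
      HasDerivAt h ((2*(1-x^2) - 2*x*(-(2*x)))/(1-x^2)^2 - ((1+x)⁻¹ + (1-x)⁻¹)) x := by
    intro x hx
    obtain ⟨hx0, hx1⟩ := hx
    have hne : (1 - x^2) ≠ 0 := by nlinarith
    have hnum : HasDerivAt (fun y : ℝ => 2*y) 2 x := by
      simpa using (hasDerivAt_id x).const_mul 2
    have hden : HasDerivAt (fun y : ℝ => 1 - y^2) (-(2*x)) x := by
      have := (hasDerivAt_const x (1:ℝ)).sub (hasDerivAt_pow 2 x)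
      simpa [Pi.sub_def] using this
    have h1 := hnum.div hden hne
    have h2 := (hasDerivAt_log_one_add (by linarith)).sub (hasDerivAt_log_one_sub (by linarith))
    have := h1.sub h2
    exact this.congr_deriv (by ring)
  have hmono : MonotoneOn h (Set.Ico (0:ℝ) 1) := by
    apply monotoneOn_of_deriv_nonneg (convex_Ico 0 1)
    · intro x hx; exact (hder x hx).continuousAt.continuousWithinAt
    · intro x hx
      rw [interior_Ico] at hx
      exact ((hder x ⟨le_of_lt hx.1, hx.2⟩).differentiableAt).differentiableWithinAt
    · intro x hx
      rw [interior_Ico] at hx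
      rw [(hder x ⟨le_of_lt hx.1, hx.2⟩).deriv]
      obtain ⟨hx0, hx1⟩ := hx
      have h1 : (0:ℝ) < 1 + x := by linarith
      have h2 : (0:ℝ) < 1 - x := by linarith
      have hne : (0:ℝ) < 1 - x^2 := by nlinarith
      have : (2*(1-x^2) - 2*x*(-(2*x)))/(1-x^2)^2 - ((1+x)⁻¹ + (1-x)⁻¹)
          = (4*x^2)/(1-x^2)^2 := by
        field_simp
        ring
      rw [this]; positivity
  have h0 : h 0 = 0 := by simp [hh]
  have := hmono (Set.mem_Ico.2 ⟨le_refl 0, by norm_num⟩) (Set.mem_Ico.2 ⟨ht0, ht1⟩) ht0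
  rw [h0] at this
  simp only [hh] at this
  linarith

/-- convert F1 to the `x`-form : `2(1-2x) ≤ log(1-x) - log x` for `0 < x ≤ 1/2`. -/
lemma owF1' {x : ℝ} (hx0 : 0 < x) (hx2 : x ≤ 1/2) :
    2*(1-2*x) ≤ Real.log (1-x) - Real.log x := by
  have h1 : Real.log (1+(1-2*x)) = Real.log 2 + Real.log (1-x) := by
    rw [show (1+(1-2*x)) = 2*(1-x) by ring, Real.log_mul two_ne_zero (by linarith)]
  have h2 : Real.log (1-(1-2*x)) = Real.log 2 + Real.log x := by
    rw [show (1-(1-2*x)) = 2*x by ring, Real.log_mul two_ne_zero (by linarith)]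
  have := owF1 (t := 1-2*x) (by linarith) (by linarith)
  rw [h1, h2] at this; linarith

/-- convert F2 to the `x`-form : `log(1-x) - log x ≤ (1-2x)/(2x(1-x))` for `0 < x ≤ 1/2`. -/
lemma owF2' {x : ℝ} (hx0 : 0 < x) (hx2 : x ≤ 1/2) :
    Real.log (1-x) - Real.log x ≤ (1-2*x)/(2*(x*(1-x))) := by
  have h1 : Real.log (1+(1-2*x)) = Real.log 2 + Real.log (1-x) := by
    rw [show (1+(1-2*x)) = 2*(1-x) by ring, Real.log_mul two_ne_zero (by linarith)]
  have h2 : Real.log (1-(1-2*x)) = Real.log 2 + Real.log x := by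
    rw [show (1-(1-2*x)) = 2*x by ring, Real.log_mul two_ne_zero (by linarith)]
  have := owF2 (t := 1-2*x) (by linarith) (by linarith)
  rw [h1, h2] at this
  have he : 2*(1-2*x)/(1-(1-2*x)^2) = (1-2*x)/(2*(x*(1-x))) := by
    rw [div_eq_div_iff] <;> nlinarith
  rw [he] at this; linarith

lemma owPhi_ge_two {x : ℝ} (hx0 : 0 < x) (hx2 : x ≤ 1/2) : 2 ≤ owPhi x := by
  unfold owPhi
  split_ifs with h
  · exact le_rfl
  · have hlt : x < 1/2 := lt_of_le_of_ne hx2 h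
    have h12 : 0 < 1 - 2*x := by linarith
    rw [le_div_iff₀ h12]
    have := owF1' hx0 hx2
    linarith

lemma owPhi_anti {x y : ℝ} (hx0 : 0 < x) (hxy : x ≤ y) (hy2 : y ≤ 1/2) :
    owPhi y ≤ owPhi x := by
  rcases eq_or_lt_of_le hxy with rfl | hlt
  · exact le_rfl
  by_cases hy : y = 1/2
  · rw [hy]; unfold owPhi; rw [if_pos rfl]
    exact owPhi_ge_two hx0 (by linarith)
  · have hylt : y < 1/2 := lt_of_le_of_ne hy2 hy
    set f : ℝ → ℝ := fun z => (Real.log (1-z) - Real.log z) / (1 - 2*z) with hf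
    have hder : ∀ z ∈ Set.Ioo (0:ℝ) (1/2), HasDerivAt f
        (((-(1-z)⁻¹ - z⁻¹) * (1-2*z) - (Real.log (1-z) - Real.log z) * (-2)) / (1-2*z)^2) z := by
      intro z hz
      obtain ⟨hz0, hz1⟩ := hz
      have hN : HasDerivAt (fun w : ℝ => Real.log (1-w) - Real.log w) (-(1-z)⁻¹ - z⁻¹) z :=
        (hasDerivAt_log_one_sub (by linarith)).sub (Real.hasDerivAt_log (ne_of_gt hz0))
      have hD : HasDerivAt (fun w : ℝ => 1 - 2*w) (-2) z := by
        simpa [Pi.sub_def] using (hasDerivAt_const z (1:ℝ)).sub ((hasDerivAt_id z).const_mul 2)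
      exact hN.div hD (by intro h; nlinarith)
    have hanti : AntitoneOn f (Set.Ioo (0:ℝ) (1/2)) := by
      apply antitoneOn_of_deriv_nonpos (convex_Ioo 0 (1/2))
      · intro z hz; exact (hder z hz).continuousAt.continuousWithinAt
      · rw [interior_Ioo]; intro z hz
        exact ((hder z hz).differentiableAt).differentiableWithinAt
      · rw [interior_Ioo]; intro z hz
        rw [(hder z hz).deriv]
        obtain ⟨hz0, hz1⟩ := hz
        apply div_nonpos_of_nonpos_of_nonneg _ (by positivity)
        have hF2 := owF2' hz0 (le_of_lt hz1)
        have hz2 : (0:ℝ) < 1 - 2*z := by linarith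
        have hzz : (0:ℝ) < z*(1-z) := by nlinarith
        have hinv : (1-z)⁻¹ + z⁻¹ = (z*(1-z))⁻¹ := by
          rw [inv_eq_one_div, inv_eq_one_div, inv_eq_one_div,
            div_add_div _ _ (by linarith : (1:ℝ)-z ≠ 0) (ne_of_gt hz0),
            div_eq_div_iff (by nlinarith : ((1:ℝ)-z)*z ≠ 0) (ne_of_gt hzz)]
          ring
        have h2N : (Real.log (1-z) - Real.log z) * 2 ≤ (1-2*z) * (z*(1-z))⁻¹ := by
          have h2 := mul_le_mul_of_nonneg_left hF2 (by norm_num : (0:ℝ) ≤ 2)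
          calc (Real.log (1-z) - Real.log z) * 2
              = 2 * (Real.log (1-z) - Real.log z) := by ring
            _ ≤ 2 * ((1-2*z)/(2*(z*(1-z)))) := h2
            _ = (1-2*z) * (z*(1-z))⁻¹ := by
                have hzz' : z*(1-z) ≠ 0 := ne_of_gt hzz
                field_simp
        have e2 : (-(1-z)⁻¹ - z⁻¹)*(1-2*z) = -((1-2*z) * (z*(1-z))⁻¹) := by
          rw [← hinv]; ring
        rw [e2]
        linarith
    have hx : x ∈ Set.Ioo (0:ℝ) (1/2) := ⟨hx0, by linarith⟩
    have hyy : y ∈ Set.Ioo (0:ℝ) (1/2) := ⟨by linarith, hylt⟩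
    have := hanti hx hyy (le_of_lt hlt)
    unfold owPhi
    rw [if_neg hy, if_neg (by intro h; rw [h] at hlt; linarith [hlt] )]
    exact this

lemma owPhi_half : owPhi (1/2) = 2 := by unfold owPhi; rw [if_pos rfl]

/-- the Ordentlich–Weinberger binary inequality, core case `q ≤ 1/2` -/
lemma owBinaryCore (q : ℝ) (hq0 : 0 < q) (hq2 : q ≤ 1/2) (p : ℝ)
    (hp0 : 0 ≤ p) (hp1 : p ≤ 1) :
    owPhi q * (p - q)^2
      ≤ p*(Real.log p - Real.log q) + (1-p)*(Real.log (1-p) - Real.log (1-q)) := by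
  set c := owPhi q with hcdef
  have hc2 : 2 ≤ c := owPhi_ge_two hq0 hq2
  have hc0 : (0:ℝ) < c := by linarith
  have hq1 : q < 1 := by linarith
  have hcform : c * (1-2*q) = Real.log (1-q) - Real.log q := by
    by_cases h : q = 1/2
    · subst h; norm_num
    · rw [hcdef]; unfold owPhi; rw [if_neg h]
      have h2 : (1:ℝ) - 2*q ≠ 0 := by
        intro hh; apply h; linarith
      field_simp
      exact mul_div_cancel_right₀ _ (by intro hh; apply h; linarith)
  have hqa : 2*c*(q*(1-q)) ≤ 1 := by
    by_cases h : q = 1/2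
    · subst h
      have : c = 2 := by rw [hcdef]; unfold owPhi; rw [if_pos rfl]
      rw [this]; norm_num
    · have hqlt : q < 1/2 := lt_of_le_of_ne hq2 h
      have h2qq : (0:ℝ) < 2*(q*(1-q)) := by nlinarith
      have h1 : (Real.log (1-q) - Real.log q) * (2*(q*(1-q))) ≤ (1-2*q) := by
        have := mul_le_mul_of_nonneg_right (owF2' hq0 hq2) (le_of_lt h2qq)
        rwa [div_mul_cancel₀ _ (ne_of_gt h2qq)] at this
      nlinarith [h1, hcform]
  -- the inflection point
  set D := Real.sqrt (1 - 2/c) with hDdef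
  have harg : (0:ℝ) ≤ 1 - 2/c := by
    rw [sub_nonneg, div_le_one hc0]; linarith
  have hDsq : D^2 = 1 - 2/c := Real.sq_sqrt harg
  have hD0 : 0 ≤ D := Real.sqrt_nonneg _
  have hD1 : D < 1 := by nlinarith [div_pos two_pos hc0]
  set a := (1-D)/2 with hadef
  have ha0 : 0 < a := by rw [hadef]; linarith
  have ha2 : a ≤ 1/2 := by rw [hadef]; linarith
  have haa : 2*c*(a*(1-a)) = 1 := by
    have e : a*(1-a) = (1 - D^2)/4 := by rw [hadef]; ring
    rw [e, hDsq]
    field_simp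
    ring
  have hqa2 : q ≤ a := by
    by_contra hcon
    push_neg at hcon
    have h1 : a*(1-a) < q*(1-q) := by nlinarith
    nlinarith [mul_pos hc0 (sub_pos.2 h1)]
  have ha1 : a < 1 := by linarith
  -- the functions
  set g : ℝ → ℝ := fun x => x * Real.log x + (1-x) * Real.log (1-x)
      - x * Real.log q - (1-x) * Real.log (1-q) - c*(x-q)^2 with hgdef
  set g1 : ℝ → ℝ := fun x => Real.log x - Real.log (1-x)
      - Real.log q + Real.log (1-q) - 2*c*(x-q) with hg1def
  have hdg : ∀ x : ℝ, 0 < x → x < 1 → HasDerivAt g (g1 x) x := by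
    intro x hx0 hx1
    have t1 := Real.hasDerivAt_mul_log (ne_of_gt hx0)
    have hsub : HasDerivAt (fun y : ℝ => 1 - y) (-1) x := by
      simpa [Pi.sub_def] using (hasDerivAt_const x (1:ℝ)).sub (hasDerivAt_id x)
    have t2 : HasDerivAt (fun y : ℝ => (1-y) * Real.log (1-y))
        ((Real.log (1-x) + 1) * (-1)) x :=
      (Real.hasDerivAt_mul_log (by intro hh; nlinarith)).comp x hsub
    have t3 : HasDerivAt (fun y : ℝ => y * Real.log q) (Real.log q) x := by
      simpa using (hasDerivAt_id x).mul_const (Real.log q)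
    have t4 : HasDerivAt (fun y : ℝ => (1-y) * Real.log (1-q)) (-Real.log (1-q)) x := by
      simpa using hsub.mul_const (Real.log (1-q))
    have t5 : HasDerivAt (fun y : ℝ => c*(y-q)^2) (c*(2*(x-q))) x := by
      have := ((hasDerivAt_id x).sub_const q).pow 2
      simpa using this.const_mul c
    have := (((t1.add t2).sub t3).sub t4).sub t5
    rw [hgdef, hg1def]
    exact this.congr_deriv (by ring)
  have hdg1 : ∀ x : ℝ, 0 < x → x < 1 → HasDerivAt g1 (x⁻¹ + (1-x)⁻¹ - 2*c) x := by
    intro x hx0 hx1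
    have t1 := Real.hasDerivAt_log (ne_of_gt hx0)
    have t2 := hasDerivAt_log_one_sub (ne_of_lt hx1)
    have t5 : HasDerivAt (fun y : ℝ => 2*c*(y-q)) (2*c) x := by
      simpa using ((hasDerivAt_id x).sub_const q).const_mul (2*c)
    have := (((t1.sub t2).sub_const (Real.log q)).add_const (Real.log (1-q))).sub t5
    rw [hg1def]
    exact this.congr_deriv (by ring)
  -- values at q and 1-q
  have hgq : g q = 0 := by simp only [hgdef]; ring
  have hg1q : g1 q = 0 := by simp only [hg1def]; ring
  have hgq' : g (1-q) = 0 := by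
    simp only [hgdef, show (1:ℝ)-(1-q) = q by ring]
    linear_combination (-(1-2*q)) * hcform
  have hg1q' : g1 (1-q) = 0 := by
    simp only [hg1def, show (1:ℝ)-(1-q) = q by ring]
    linear_combination (-2) * hcform
  -- second derivative sign
  have hg2form : ∀ x : ℝ, 0 < x → x < 1 →
      x⁻¹ + (1-x)⁻¹ - 2*c = (1 - 2*c*(x*(1-x)))/(x*(1-x)) := by
    intro x hx0 hx1
    have h1 : x ≠ 0 := ne_of_gt hx0
    have h2 : (1:ℝ) - x ≠ 0 := by intro hh; nlinarith
    field_simp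
    ring
  -- monotonicity of g1 on (0, a]
  have M1 : MonotoneOn g1 (Set.Ioc 0 a) := by
    apply monotoneOn_of_deriv_nonneg (convex_Ioc 0 a)
    · intro x hx
      exact (hdg1 x hx.1 (lt_of_le_of_lt hx.2 ha1)).continuousAt.continuousWithinAt
    · rw [interior_Ioc]; intro x hx
      exact (hdg1 x hx.1 (lt_trans hx.2 ha1)).differentiableAt.differentiableWithinAt
    · rw [interior_Ioc]; intro x hx
      have hx1 : x < 1 := lt_trans hx.2 ha1
      rw [(hdg1 x hx.1 hx1).deriv, hg2form x hx.1 hx1]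
      have hxx : x*(1-x) ≤ a*(1-a) := by nlinarith [hx.1, hx.2, ha2]
      apply div_nonneg _ (by nlinarith [hx.1, hx.2, ha2])
      nlinarith [mul_nonneg (le_of_lt hc0) (sub_nonneg.2 hxx), haa]
  -- monotonicity of g1 on [1-a, 1)
  have M3 : MonotoneOn g1 (Set.Ico (1-a) 1) := by
    apply monotoneOn_of_deriv_nonneg (convex_Ico (1-a) 1)
    · intro x hx
      exact (hdg1 x (by linarith [hx.1]) hx.2).continuousAt.continuousWithinAt
    · rw [interior_Ico]; intro x hx
      exact (hdg1 x (by linarith [hx.1]) hx.2).differentiableAt.differentiableWithinAt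
    · rw [interior_Ico]; intro x hx
      have hx0 : 0 < x := by linarith [hx.1]
      rw [(hdg1 x hx0 hx.2).deriv, hg2form x hx0 hx.2]
      have hxx : x*(1-x) ≤ a*(1-a) := by nlinarith [hx.1, hx.2, ha2]
      apply div_nonneg _ (by nlinarith [hx.1, hx.2, ha2])
      nlinarith [mul_nonneg (le_of_lt hc0) (sub_nonneg.2 hxx), haa]
  -- antitone of g1 on [a, 1-a]
  have A2 : AntitoneOn g1 (Set.Icc a (1-a)) := by
    apply antitoneOn_of_deriv_nonpos (convex_Icc a (1-a))
    · intro x hx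
      exact (hdg1 x (by linarith [hx.1]) (by linarith [hx.2])).continuousAt.continuousWithinAt
    · rw [interior_Icc]; intro x hx
      exact (hdg1 x (by linarith [hx.1]) (by linarith [hx.2])).differentiableAt.differentiableWithinAt
    · rw [interior_Icc]; intro x hx
      have hx0 : 0 < x := by linarith [hx.1]
      have hx1 : x < 1 := by linarith [hx.2]
      rw [(hdg1 x hx0 hx1).deriv, hg2form x hx0 hx1]
      have hxx : a*(1-a) ≤ x*(1-x) := by nlinarith [hx.1, hx.2]
      apply div_nonpos_of_nonpos_of_nonneg _ (by nlinarith [hx.1, hx.2, ha0])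
      nlinarith [mul_nonneg (le_of_lt hc0) (sub_nonneg.2 hxx), haa]
  -- g antitone on (0, q]
  have A1 : AntitoneOn g (Set.Ioc 0 q) := by
    apply antitoneOn_of_deriv_nonpos (convex_Ioc 0 q)
    · intro x hx
      exact (hdg x hx.1 (by linarith [hx.2])).continuousAt.continuousWithinAt
    · rw [interior_Ioc]; intro x hx
      exact (hdg x hx.1 (by linarith [hx.2])).differentiableAt.differentiableWithinAt
    · rw [interior_Ioc]; intro x hx
      rw [(hdg x hx.1 (by linarith [hx.2])).deriv]
      have := M1 (Set.mem_Ioc.2 ⟨hx.1, le_of_lt (lt_of_lt_of_le hx.2 hqa2)⟩)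
        (Set.mem_Ioc.2 ⟨hq0, hqa2⟩) (le_of_lt hx.2)
      linarith [hg1q]
  -- g monotone on [q, a]
  have M2 : MonotoneOn g (Set.Icc q a) := by
    apply monotoneOn_of_deriv_nonneg (convex_Icc q a)
    · intro x hx
      exact (hdg x (by linarith [hx.1]) (by linarith [hx.2])).continuousAt.continuousWithinAt
    · rw [interior_Icc]; intro x hx
      exact (hdg x (by linarith [hx.1]) (by linarith [hx.2])).differentiableAt.differentiableWithinAt
    · rw [interior_Icc]; intro x hx
      rw [(hdg x (by linarith [hx.1]) (by linarith [hx.2])).deriv]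
      have := M1 (Set.mem_Ioc.2 ⟨hq0, hqa2⟩)
        (Set.mem_Ioc.2 ⟨by linarith [hx.1], le_of_lt hx.2⟩) (le_of_lt hx.1)
      linarith [hg1q]
  -- g antitone on [1-a, 1-q]
  have A3 : AntitoneOn g (Set.Icc (1-a) (1-q)) := by
    apply antitoneOn_of_deriv_nonpos (convex_Icc (1-a) (1-q))
    · intro x hx
      exact (hdg x (by linarith [hx.1]) (by linarith [hx.2])).continuousAt.continuousWithinAt
    · rw [interior_Icc]; intro x hx
      exact (hdg x (by linarith [hx.1]) (by linarith [hx.2])).differentiableAt.differentiableWithinAt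
    · rw [interior_Icc]; intro x hx
      rw [(hdg x (by linarith [hx.1]) (by linarith [hx.2])).deriv]
      have := M3 (Set.mem_Ico.2 ⟨le_of_lt hx.1, by linarith [hx.2]⟩)
        (Set.mem_Ico.2 ⟨by linarith, by linarith⟩) (le_of_lt hx.2)
      linarith [hg1q']
  -- g monotone on [1-q, 1)
  have M4 : MonotoneOn g (Set.Ico (1-q) 1) := by
    apply monotoneOn_of_deriv_nonneg (convex_Ico (1-q) 1)
    · intro x hx
      exact (hdg x (by linarith [hx.1]) hx.2).continuousAt.continuousWithinAt
    · rw [interior_Ico]; intro x hx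
      exact (hdg x (by linarith [hx.1]) hx.2).differentiableAt.differentiableWithinAt
    · rw [interior_Ico]; intro x hx
      rw [(hdg x (by linarith [hx.1]) hx.2).deriv]
      have := M3 (Set.mem_Ico.2 ⟨by linarith, by linarith⟩)
        (Set.mem_Ico.2 ⟨by linarith [hx.1], hx.2⟩) (le_of_lt hx.1)
      linarith [hg1q']
  -- concavity on [a, 1-a]
  have Conc : ConcaveOn ℝ (Set.Icc a (1-a)) g := by
    apply AntitoneOn.concaveOn_of_deriv (convex_Icc a (1-a))
    · intro x hx
      exact (hdg x (by linarith [hx.1]) (by linarith [hx.2])).continuousAt.continuousWithinAt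
    · rw [interior_Icc]; intro x hx
      exact (hdg x (by linarith [hx.1]) (by linarith [hx.2])).differentiableAt.differentiableWithinAt
    · rw [interior_Icc]; intro x hx y hy hxy
      rw [(hdg x (by linarith [hx.1]) (by linarith [hx.2])).deriv,
        (hdg y (by linarith [hy.1]) (by linarith [hy.2])).deriv]
      exact A2 ⟨le_of_lt hx.1, le_of_lt hx.2⟩ ⟨le_of_lt hy.1, le_of_lt hy.2⟩ hxy
  -- endpoint values
  have hga : 0 ≤ g a := by
    have := M2 (Set.mem_Icc.2 ⟨le_refl q, hqa2⟩) (Set.mem_Icc.2 ⟨hqa2, le_refl a⟩) hqa2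
    linarith [hgq]
  have hga' : 0 ≤ g (1-a) := by
    have := A3 (Set.mem_Icc.2 ⟨le_refl (1-a), by linarith⟩)
      (Set.mem_Icc.2 ⟨by linarith, le_refl (1-q)⟩) (by linarith)
    linarith [hgq']
  -- combine on (0,1)
  have key : ∀ x ∈ Set.Ioo (0:ℝ) 1, 0 ≤ g x := by
    intro x hx
    obtain ⟨hx0, hx1⟩ := hx
    rcases le_total x q with hxq | hqx
    · have := A1 (Set.mem_Ioc.2 ⟨hx0, hxq⟩) (Set.mem_Ioc.2 ⟨hq0, le_refl q⟩) hxq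
      linarith [hgq]
    rcases le_total x a with hxa | hax
    · have := M2 (Set.mem_Icc.2 ⟨le_refl q, hqa2⟩) (Set.mem_Icc.2 ⟨hqx, hxa⟩) hqx
      linarith [hgq]
    rcases le_total x (1-a) with hxa' | hax'
    · have hmem : x ∈ Set.Icc a (1-a) := Set.mem_Icc.2 ⟨hax, hxa'⟩
      have := Conc.min_le_of_mem_Icc (Set.mem_Icc.2 ⟨le_refl a, by linarith⟩)
        (Set.mem_Icc.2 ⟨by linarith, le_refl (1-a)⟩) hmem
      have hmin : (0:ℝ) ≤ min (g a) (g (1-a)) := le_min hga hga'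
      linarith
    rcases le_total x (1-q) with hxq' | hqx'
    · have := A3 (Set.mem_Icc.2 ⟨hax', hxq'⟩) (Set.mem_Icc.2 ⟨by linarith, le_refl (1-q)⟩) hxq'
      linarith [hgq']
    · have := M4 (Set.mem_Ico.2 ⟨le_refl (1-q), by linarith⟩) (Set.mem_Ico.2 ⟨hqx', hx1⟩) hqx'
      linarith [hgq']
  -- extend to [0,1] by continuity
  have hgc : Continuous g := by
    rw [hgdef]
    have h1 := Real.continuous_mul_log
    have h2 : Continuous (fun x : ℝ => (1-x) * Real.log (1-x)) :=
      h1.comp (continuous_const.sub continuous_id)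
    exact (((h1.add h2).sub (continuous_id.mul continuous_const)).sub
      ((continuous_const.sub continuous_id).mul continuous_const)).sub
      (continuous_const.mul ((continuous_id.sub continuous_const).pow 2))
  have hIcc : ∀ x ∈ Set.Icc (0:ℝ) 1, 0 ≤ g x := by
    have hclosed : IsClosed {x : ℝ | 0 ≤ g x} := isClosed_le continuous_const hgc
    intro x hx
    have hsub : Set.Icc (0:ℝ) 1 ⊆ {x : ℝ | 0 ≤ g x} := by
      rw [← closure_Ioo (by norm_num : (0:ℝ) ≠ 1)]
      exact hclosed.closure_subset_iff.2 key
    exact hsub hx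
  have hfin := hIcc p (Set.mem_Icc.2 ⟨hp0, hp1⟩)
  simp only [hgdef] at hfin
  have e : p*(Real.log p - Real.log q) + (1-p)*(Real.log (1-p) - Real.log (1-q))
      = p * Real.log p + (1-p) * Real.log (1-p)
        - p * Real.log q - (1-p) * Real.log (1-q) := by ring
  rw [e]
  linarith

/-- full binary OW inequality -/
lemma owBinary (q : ℝ) (hq0 : 0 < q) (hq1 : q < 1) (p : ℝ) (hp0 : 0 ≤ p) (hp1 : p ≤ 1) :
    owPhi (min q (1-q)) * (p - q)^2
      ≤ p*(Real.log p - Real.log q) + (1-p)*(Real.log (1-p) - Real.log (1-q)) := by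
  rcases le_total q (1/2) with h | h
  · rw [min_eq_left (by linarith)]
    exact owBinaryCore q hq0 h p hp0 hp1
  · rw [min_eq_right (by linarith)]
    have hcore := owBinaryCore (1-q) (by linarith) (by linarith) (1-p)
      (by linarith) (by linarith)
    rw [show (1:ℝ)-(1-q) = q by ring, show (1:ℝ)-(1-p) = p by ring] at hcore
    have e3 : (p-q)^2 = ((1-p)-(1-q))^2 := by ring
    rw [e3]
    linarith

/-- log-sum inequality -/
lemma owLogSum {ι : Type*} (A : Finset ι) (a b : ι → ℝ)
    (ha : ∀ j ∈ A, 0 ≤ a j) (hb : ∀ j ∈ A, 0 < b j) :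
    (∑ j ∈ A, a j) * (Real.log (∑ j ∈ A, a j) - Real.log (∑ j ∈ A, b j))
      ≤ ∑ j ∈ A, a j * (Real.log (a j) - Real.log (b j)) := by
  rcases A.eq_empty_or_nonempty with rfl | hA
  · simp
  have hB : 0 < ∑ j ∈ A, b j := Finset.sum_pos hb hA
  set B := ∑ j ∈ A, b j with hBdef
  set S := ∑ j ∈ A, a j with hSdef
  have hS : 0 ≤ S := Finset.sum_nonneg ha
  have hjen := Real.convexOn_mul_log.map_sum_le (t := A)
    (w := fun j => b j / B) (p := fun j => a j / b j)
    (fun j hj => div_nonneg (le_of_lt (hb j hj)) (le_of_lt hB))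
    (by rw [← Finset.sum_div]; exact div_self (ne_of_gt hB))
    (fun j hj => div_nonneg (ha j hj) (le_of_lt (hb j hj)))
  have hpt : ∑ j ∈ A, (b j / B) • (a j / b j) = S / B := by
    rw [hSdef, Finset.sum_div]
    apply Finset.sum_congr rfl
    intro j hj
    have := ne_of_gt (hb j hj)
    have hB' := ne_of_gt hB
    field_simp
    ring
    rw [mul_inv_cancel_right₀ this, mul_comm B, mul_inv_cancel_right₀ hB']
  rw [hpt] at hjen
  simp only [smul_eq_mul] at hjen
  -- multiply by B
  have hjen2 : S * Real.log (S / B) ≤ ∑ j ∈ A, a j * Real.log (a j / b j) := by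
    have := mul_le_mul_of_nonneg_left hjen (le_of_lt hB)
    calc S * Real.log (S / B) = B * (S / B * Real.log (S / B)) := by
          field_simp
      _ ≤ B * ∑ j ∈ A, b j / B * (a j / b j * Real.log (a j / b j)) := this
      _ = ∑ j ∈ A, a j * Real.log (a j / b j) := by
          rw [Finset.mul_sum]
          apply Finset.sum_congr rfl
          intro j hj
          have h1 := ne_of_gt (hb j hj)
          have h2 := ne_of_gt hB
          field_simp
  -- convert logs of quotient into differences
  have hL : S * Real.log (S / B) = S * (Real.log S - Real.log B) := by
    rcases eq_or_lt_of_le hS with h | h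
    · rw [← h]; ring
    · rw [Real.log_div (ne_of_gt h) (ne_of_gt hB)]
  have hR : ∀ j ∈ A, a j * Real.log (a j / b j) = a j * (Real.log (a j) - Real.log (b j)) := by
    intro j hj
    rcases eq_or_lt_of_le (ha j hj) with h | h
    · rw [← h]; ring
    · rw [Real.log_div (ne_of_gt h) (ne_of_gt (hb j hj))]
  rw [hL] at hjen2
  calc S * (Real.log S - Real.log B) ≤ ∑ j ∈ A, a j * Real.log (a j / b j) := hjen2
    _ = ∑ j ∈ A, a j * (Real.log (a j) - Real.log (b j)) := Finset.sum_congr rfl hR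

/-- distribution-dependent Pinsker (Ordentlich–Weinberger) -/
lemma owPinsker {m : ℕ} (p χ : Fin m → ℝ) (hp : ∀ j, 0 ≤ p j) (hχ : ∀ j, 0 < χ j)
    (hps : ∑ j, p j = 1) (hχs : ∑ j, χ j = 1) (β : ℝ) (hβ0 : 0 < β) (hβh : β ≤ 1/2)
    (hβmax : ∀ I : Finset (Fin m), min (∑ i ∈ I, χ i) (1 - ∑ i ∈ I, χ i) ≤ β) :
    owPhi β / 4 * (∑ j, |p j - χ j|)^2
      ≤ ∑ j, p j * (Real.log (p j) - Real.log (χ j)) := by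
  classical
  set A : Finset (Fin m) := Finset.univ.filter (fun j => χ j < p j) with hAdef
  set P := ∑ j ∈ A, p j with hPdef
  set Q := ∑ j ∈ A, χ j with hQdef
  set A' : Finset (Fin m) := Finset.univ.filter (fun j => ¬ χ j < p j) with hA'def
  have hsplitp : P + ∑ j ∈ A', p j = 1 := by
    rw [hPdef, hA'def, hAdef, Finset.sum_filter_add_sum_filter_not, hps]
  have hsplitχ : Q + ∑ j ∈ A', χ j = 1 := by
    rw [hQdef, hA'def, hAdef, Finset.sum_filter_add_sum_filter_not, hχs]
  have habs : ∑ j, |p j - χ j| = 2*(P - Q) := by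
    rw [← Finset.sum_filter_add_sum_filter_not Finset.univ (fun j => χ j < p j)
      (fun j => |p j - χ j|)]
    have h1 : ∑ j ∈ A, |p j - χ j| = P - Q := by
      rw [hPdef, hQdef, ← Finset.sum_sub_distrib]
      apply Finset.sum_congr rfl
      intro j hj
      rw [hAdef, Finset.mem_filter] at hj
      rw [abs_of_pos (by linarith [hj.2])]
    have h2 : ∑ j ∈ A', |p j - χ j| = (1 - Q) - (1 - P) := by
      have e : (1 - Q) - (1 - P) = ∑ j ∈ A', χ j - ∑ j ∈ A', p j := by
        linarith [hsplitp, hsplitχ]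
      rw [e, ← Finset.sum_sub_distrib]
      apply Finset.sum_congr rfl
      intro j hj
      rw [hA'def, Finset.mem_filter] at hj
      push_neg at hj
      rw [abs_of_nonpos (by linarith [hj.2])]
      ring
    rw [h1, h2]
    ring
  have hPQ : Q ≤ P := by
    have : 0 ≤ ∑ j, |p j - χ j| := Finset.sum_nonneg (fun j _ => abs_nonneg _)
    linarith [habs]
  rcases eq_or_lt_of_le hPQ with heq | hlt
  · -- degenerate : total variation zero
    rw [habs, ← heq]
    simp only [sub_self, mul_zero]
    rw [show ((0:ℝ))^2 = 0 by norm_num, mul_zero]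
    have := owLogSum Finset.univ p χ (fun j _ => hp j) (fun j _ => hχ j)
    rw [hps, hχs] at this
    simpa using this
  · -- main case
    have hAne : A.Nonempty := by
      by_contra h
      rw [Finset.not_nonempty_iff_eq_empty] at h
      rw [hPdef, hQdef, h] at hlt
      simp at hlt
    have hQ0 : 0 < Q := Finset.sum_pos (fun j _ => hχ j) hAne
    have hP1 : P ≤ 1 := by
      have : 0 ≤ ∑ j ∈ A', p j := Finset.sum_nonneg (fun j hj => hp j)
      linarith [hsplitp]
    have hQ1 : Q < 1 := by linarith
    have hP0 : 0 ≤ P := le_of_lt (lt_of_lt_of_le hQ0 hPQ)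
    -- two log-sum applications
    have hls1 := owLogSum A p χ (fun j _ => hp j) (fun j _ => hχ j)
    have hls2 := owLogSum A' p χ (fun j _ => hp j) (fun j _ => hχ j)
    have eA'p : ∑ j ∈ A', p j = 1 - P := by linarith [hsplitp]
    have eA'χ : ∑ j ∈ A', χ j = 1 - Q := by linarith [hsplitχ]
    rw [eA'p, eA'χ] at hls2
    have hKL : P*(Real.log P - Real.log Q) + (1-P)*(Real.log (1-P) - Real.log (1-Q))
        ≤ ∑ j, p j * (Real.log (p j) - Real.log (χ j)) := by
      rw [← Finset.sum_filter_add_sum_filter_not Finset.univ (fun j => χ j < p j)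
        (fun j => p j * (Real.log (p j) - Real.log (χ j)))]
      exact add_le_add hls1 hls2
    have hbin := owBinary Q hQ0 hQ1 P hP0 hP1
    have hphi : owPhi β ≤ owPhi (min Q (1-Q)) := by
      apply owPhi_anti _ _ hβh
      · rcases le_total Q (1-Q) with h | h
        · rw [min_eq_left h]; exact hQ0
        · rw [min_eq_right h]; linarith
      · have := hβmax A
        rw [← hQdef] at this
        exact this
    have hsq : (0:ℝ) ≤ (P - Q)^2 := sq_nonneg _
    have hchain : owPhi β * (P-Q)^2 ≤ P*(Real.log P - Real.log Q)
        + (1-P)*(Real.log (1-P) - Real.log (1-Q)) := by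
      calc owPhi β * (P-Q)^2 ≤ owPhi (min Q (1-Q)) * (P-Q)^2 :=
            mul_le_mul_of_nonneg_right hphi hsq
        _ ≤ _ := hbin
    rw [habs]
    calc owPhi β / 4 * (2*(P-Q))^2 = owPhi β * (P-Q)^2 := by ring
      _ ≤ _ := le_trans hchain hKL



/-- Generalized entropy `G(x) = -∑ xᵢ ln xᵢ + (∑ xᵢ) ln (∑ xᵢ)`
(with the convention `0 ln 0 = 0`, automatic since `Real.log 0 = 0`). -/
noncomputable def genEntropy {m : ℕ} (x : Fin m → ℝ) : ℝ :=
  -(∑ i, x i * Real.log (x i)) + (∑ i, x i) * Real.log (∑ i, x i)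

/-- Under the Lagrange-form hypotheses, with
`β* = max_{I⊆{1,…,m}} min(∑_{i∈I} χ*ᵢ, 1 − ∑_{i∈I} χ*ᵢ)` and
`γ* = ln((1−β*)/β*) / (4(1−2β*))` (and `γ* = 1/2` when `β* = 1/2`):
`γ* ≥ 1/2`, `(1 − maxᵢ χ*ᵢ)/2 ≤ β* ≤ 1/2`, and every count vector `ν`
satisfying the `δ`-relaxed constraints with `‖ν − x*‖₁ > |n − s*| + min(n,s*)ϑ`
has `G(ν) ≤ G* + Λ*δ − γ*ϑ²n`. -/
theorem stmt9 {m p q : ℕ} (hm : 2 ≤ m)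
    (AE : Matrix (Fin p) (Fin m) ℝ) (bE : Fin p → ℝ) (hbE : ∀ i, bE i ≠ 0)
    (AI : Matrix (Fin q) (Fin m) ℝ) (bI : Fin q → ℝ) (hbI : ∀ i, bI i ≠ 0)
    (xs : Fin m → ℝ) (hxs : ∀ j, 0 < xs j)
    (ss : ℝ) (hss : ss = ∑ j, xs j)
    (hE : AE.mulVec xs = bE)
    (Bind : Finset (Fin q)) (hbind : ∀ i ∈ Bind, AI.mulVec xs i = bI i)
    (lamE : Fin p → ℝ) (lamBI : Fin q → ℝ) (hlam : ∀ i ∈ Bind, 0 ≤ lamBI i)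
    (hstat : ∀ j, xs j =
      ss * Real.exp (-(∑ i, lamE i * AE i j + ∑ i ∈ Bind, lamBI i * AI i j)))
    (Gs Λs : ℝ) (hGs : Gs = genEntropy xs)
    (hΛ : Λs = (∑ i, |lamE i| * |bE i|) + ∑ i ∈ Bind, lamBI i * |bI i|)
    (βs : ℝ)
    (hβ : βs = (Finset.univ : Finset (Fin m)).powerset.sup'
        (Finset.powerset_nonempty _)
        (fun I => min (∑ i ∈ I, xs i / ss) (1 - ∑ i ∈ I, xs i / ss)))
    (γs : ℝ)
    (hγ : γs = if βs = 1 / 2 then 1 / 2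
        else 1 / (4 * (1 - 2 * βs)) * Real.log ((1 - βs) / βs)) :
    1 / 2 ≤ γs ∧
    (1 - ⨆ i, xs i / ss) / 2 ≤ βs ∧ βs ≤ 1 / 2 ∧
    ∀ δ : ℝ, 0 ≤ δ → ∀ ϑ : ℝ, 0 < ϑ → ∀ ν : Fin m → ℕ,
      (∀ i, bE i - δ * |bE i| ≤ AE.mulVec (fun j => (ν j : ℝ)) i ∧
            AE.mulVec (fun j => (ν j : ℝ)) i ≤ bE i + δ * |bE i|) →
      (∀ i, AI.mulVec (fun j => (ν j : ℝ)) i ≤ bI i + δ * |bI i|) →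
      ∀ n : ℕ, n = ∑ i, ν i →
      (∑ i, |(ν i : ℝ) - xs i|) > |(n : ℝ) - ss| + min (n : ℝ) ss * ϑ →
      genEntropy (fun i => (ν i : ℝ)) ≤ Gs + Λs * δ - γs * ϑ ^ 2 * n := by
    classical
  have hmne : (Finset.univ : Finset (Fin m)).Nonempty := by
    rw [Finset.univ_nonempty_iff]
    exact ⟨⟨0, by omega⟩⟩
  have hss0 : 0 < ss := by
    rw [hss]; exact Finset.sum_pos (fun j _ => hxs j) hmne
  have hχpos : ∀ i, 0 < xs i / ss := fun i => div_pos (hxs i) hss0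
  have hχsum : ∑ i, xs i / ss = 1 := by
    rw [← Finset.sum_div, ← hss]; exact div_self (ne_of_gt hss0)
  have hxslt : ∀ i, xs i < ss := by
    intro i
    have hrest : 0 < ∑ j ∈ Finset.univ.erase i, xs j := by
      apply Finset.sum_pos (fun j _ => hxs j)
      obtain ⟨j, hj⟩ := Fintype.exists_ne_of_one_lt_card (by
        rw [Fintype.card_fin]; omega) i
      exact ⟨j, Finset.mem_erase.2 ⟨hj, Finset.mem_univ j⟩⟩
    have := Finset.sum_erase_add Finset.univ xs (Finset.mem_univ i)
    rw [hss]; linarith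
  have hχlt1 : ∀ i, xs i / ss < 1 := fun i => (div_lt_one hss0).2 (hxslt i)
  have hβmax : ∀ I : Finset (Fin m),
      min (∑ i ∈ I, xs i / ss) (1 - ∑ i ∈ I, xs i / ss) ≤ βs := by
    intro I
    rw [hβ]
    exact Finset.le_sup'
      (fun I : Finset (Fin m) => min (∑ i ∈ I, xs i / ss) (1 - ∑ i ∈ I, xs i / ss))
      (Finset.mem_powerset.2 (Finset.subset_univ I))
  have hβhalf : βs ≤ 1/2 := by
    rw [hβ]
    apply Finset.sup'_le
    intro I _
    rcases le_total (∑ i ∈ I, xs i / ss) (1/2) with h | h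
    · exact le_trans (min_le_left _ _) h
    · exact le_trans (min_le_right _ _) (by linarith)
  set i₀ : Fin m := ⟨0, by omega⟩ with hi₀
  have hβ0 : 0 < βs := by
    have h1 := hβmax {i₀}
    rw [Finset.sum_singleton] at h1
    have := hχpos i₀
    have := hχlt1 i₀
    calc (0:ℝ) < min (xs i₀ / ss) (1 - xs i₀ / ss) := lt_min (by linarith) (by linarith)
      _ ≤ βs := h1
  have hγphi : γs = owPhi βs / 4 := by
    rw [hγ]; unfold owPhi
    by_cases h : βs = 1/2
    · rw [if_pos h, if_pos h]; norm_num
    · rw [if_neg h, if_neg h]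
      have hβlt : βs < 1/2 := lt_of_le_of_ne hβhalf h
      have h2 : (1:ℝ) - 2*βs ≠ 0 := by intro hh; apply h; linarith
      rw [Real.log_div (by linarith : (1:ℝ) - βs ≠ 0) (ne_of_gt hβ0)]
      field_simp
  have hγhalf : 1/2 ≤ γs := by
    rw [hγphi]
    linarith [owPhi_ge_two hβ0 hβhalf]
  refine ⟨hγhalf, ?_, hβhalf, ?_⟩
  · -- (1 - sup)/2 ≤ βs
    set M := (⨆ i, xs i / ss) with hM
    have hbdd : BddAbove (Set.range fun i => xs i / ss) :=
      Set.Finite.bddAbove (Set.finite_range _)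
    have hMub : ∀ i, xs i / ss ≤ M := fun i => le_ciSup hbdd i
    have hM0 : 0 < M := lt_of_lt_of_le (hχpos i₀) (hMub i₀)
    have hM1 : M < 1 := by
      have hne : Nonempty (Fin m) := ⟨⟨0, by omega⟩⟩
      obtain ⟨imax, himax⟩ := Finite.exists_max (fun i : Fin m => xs i / ss)
      have : M ≤ xs imax / ss := ciSup_le himax
      exact lt_of_le_of_lt this (hχlt1 imax)
    set F := Finset.univ.powerset.filter
      (fun I : Finset (Fin m) => ∑ i ∈ I, xs i / ss ≤ (1+M)/2) with hF
    have hFne : F.Nonempty := by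
      refine ⟨∅, ?_⟩
      rw [hF, Finset.mem_filter]
      constructor
      · exact Finset.mem_powerset.2 (Finset.empty_subset _)
      · rw [Finset.sum_empty]; linarith
    obtain ⟨I₀, hI₀F, hI₀max⟩ := F.exists_max_image (fun I => ∑ i ∈ I, xs i / ss) hFne
    have hS₀ub : ∑ i ∈ I₀, xs i / ss ≤ (1+M)/2 := by
      rw [hF, Finset.mem_filter] at hI₀F; exact hI₀F.2
    have hS₀lb : (1-M)/2 ≤ ∑ i ∈ I₀, xs i / ss := by
      by_contra hcon
      push_neg at hcon
      have hI₀ne : I₀ ≠ Finset.univ := by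
        intro h
        rw [h, hχsum] at hcon
        linarith
      have : ∃ j, j ∉ I₀ := by
        by_contra h
        push_neg at h
        exact hI₀ne (Finset.eq_univ_iff_forall.2 h)
      obtain ⟨j, hj⟩ := this
      have hJ : insert j I₀ ∈ F := by
        rw [hF, Finset.mem_filter]
        refine ⟨Finset.mem_powerset.2 (Finset.subset_univ _), ?_⟩
        rw [Finset.sum_insert hj]
        have := hMub j
        linarith
      have := hI₀max _ hJ
      rw [Finset.sum_insert hj] at this
      linarith [hχpos j]
    calc (1 - M)/2 ≤ min (∑ i ∈ I₀, xs i / ss) (1 - ∑ i ∈ I₀, xs i / ss) :=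
          le_min hS₀lb (by linarith)
      _ ≤ βs := hβmax I₀
  · -- main inequality
    intro δ hδ ϑ hϑ ν hνE hνI n hn hL1
    rcases Nat.eq_zero_or_pos n with hn0 | hnpos
    · exfalso
      have hν0 : ∀ i, ν i = 0 := by
        intro i
        have := (Finset.sum_eq_zero_iff.1 (hn0 ▸ hn).symm) i (Finset.mem_univ i)
        exact this
      have hLHS : ∑ i, |(ν i : ℝ) - xs i| = ss := by
        rw [hss]
        apply Finset.sum_congr rfl
        intro i _
        rw [hν0 i]
        simp [abs_of_pos (hxs i)]
      rw [hLHS, hn0] at hL1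
      simp only [Nat.cast_zero, zero_sub, abs_neg, abs_of_pos hss0,
        min_eq_left (le_of_lt hss0)] at hL1
      nlinarith [hL1, mul_pos hss0 hϑ]
    have hN : (0:ℝ) < (n:ℝ) := by exact_mod_cast hnpos
    set c : Fin m → ℝ := fun j =>
      (∑ i, lamE i * AE i j) + (∑ i ∈ Bind, lamBI i * AI i j) with hcdef
    have hlogxs : ∀ j, Real.log (xs j) = Real.log ss - c j := by
      intro j
      rw [hstat j, Real.log_mul (ne_of_gt hss0) (Real.exp_ne_zero _), Real.log_exp]
      rw [hcdef]
      ring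
    have hswap : ∀ v : Fin m → ℝ, ∑ j, v j * c j =
        (∑ i, lamE i * AE.mulVec v i) + ∑ i ∈ Bind, lamBI i * AI.mulVec v i := by
      intro v
      have e : ∀ j ∈ Finset.univ, v j * c j =
          (∑ i, v j * (lamE i * AE i j)) + (∑ i ∈ Bind, v j * (lamBI i * AI i j)) := by
        intro j _
        rw [hcdef, mul_add, Finset.mul_sum, Finset.mul_sum]
      rw [Finset.sum_congr rfl e, Finset.sum_add_distrib]
      congr 1
      · rw [Finset.sum_comm]
        apply Finset.sum_congr rfl
        intro i _
        simp only [Matrix.mulVec, dotProduct, Finset.mul_sum]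
        apply Finset.sum_congr rfl
        intro j _
        ring
      · rw [Finset.sum_comm]
        apply Finset.sum_congr rfl
        intro i _
        simp only [Matrix.mulVec, dotProduct, Finset.mul_sum]
        apply Finset.sum_congr rfl
        intro j _
        ring
    have hGsc : Gs = ∑ j, xs j * c j := by
      have e : ∀ j ∈ Finset.univ, xs j * c j
          = xs j * Real.log ss - xs j * Real.log (xs j) := by
        intro j _
        have hc : c j = Real.log ss - Real.log (xs j) := by linarith [hlogxs j]
        rw [hc]; ring
      rw [hGs]
      unfold genEntropy
      rw [← hss, Finset.sum_congr rfl e, Finset.sum_sub_distrib, ← Finset.sum_mul, ← hss]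
      ring
    have hdual : ∑ j, (ν j : ℝ) * c j ≤ Gs + Λs * δ := by
      have h1 := hswap (fun j => (ν j : ℝ))
      have h2 := hswap xs
      have hb1 : ∑ i, lamE i * AE.mulVec (fun j => (ν j : ℝ)) i
          ≤ ∑ i, (lamE i * bE i + δ * (|lamE i| * |bE i|)) := by
        apply Finset.sum_le_sum
        intro i _
        obtain ⟨hlo, hhi⟩ := hνE i
        rcases le_or_gt 0 (lamE i) with h | h
        · have := mul_le_mul_of_nonneg_left hhi h
          rw [mul_add] at this
          rw [abs_of_nonneg h]
          nlinarith [this]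
        · have := mul_le_mul_of_nonpos_left hlo (le_of_lt h)
          rw [mul_sub] at this
          rw [abs_of_neg h]
          nlinarith [this]
      have hb2 : ∑ i ∈ Bind, lamBI i * AI.mulVec (fun j => (ν j : ℝ)) i
          ≤ ∑ i ∈ Bind, (lamBI i * bI i + δ * (lamBI i * |bI i|)) := by
        apply Finset.sum_le_sum
        intro i hi
        have := mul_le_mul_of_nonneg_left (hνI i) (hlam i hi)
        rw [mul_add] at this
        nlinarith [this]
      have hb1s : ∑ i, (lamE i * bE i + δ * (|lamE i| * |bE i|))
          = ∑ i, lamE i * bE i + δ * ∑ i, |lamE i| * |bE i| := by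
        rw [Finset.sum_add_distrib, Finset.mul_sum]
      have hb2s : ∑ i ∈ Bind, (lamBI i * bI i + δ * (lamBI i * |bI i|))
          = ∑ i ∈ Bind, lamBI i * bI i + δ * ∑ i ∈ Bind, lamBI i * |bI i| := by
        rw [Finset.sum_add_distrib, Finset.mul_sum]
      have heq : ∑ i, lamE i * bE i + ∑ i ∈ Bind, lamBI i * bI i = ∑ j, xs j * c j := by
        rw [h2, hE]
        congr 1
        apply Finset.sum_congr rfl
        intro i hi
        rw [hbind i hi]
      rw [h1]
      rw [hΛ]
      rw [hb1s] at hb1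
      rw [hb2s] at hb2
      rw [← hGsc] at heq
      linarith [hb1, hb2]
    -- entropy decomposition
    have hsumν : ∑ j, ((ν j : ℝ)) = (n:ℝ) := by
      rw [hn, Nat.cast_sum]
    set KL : ℝ := ∑ j, ((ν j:ℝ)/(n:ℝ)) * (Real.log ((ν j:ℝ)/(n:ℝ))
      - Real.log (xs j / ss)) with hKLdef
    have hdecomp : genEntropy (fun j => (ν j:ℝ))
        = (∑ j, (ν j:ℝ) * c j) - (n:ℝ) * KL := by
      have E : ∀ j ∈ Finset.univ, (ν j:ℝ) * c j
          - (n:ℝ)*(((ν j:ℝ)/(n:ℝ)) * (Real.log ((ν j:ℝ)/(n:ℝ)) - Real.log (xs j/ss)))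
          = -((ν j:ℝ) * Real.log (ν j:ℝ)) + (ν j:ℝ) * Real.log (n:ℝ) := by
        intro j _
        have hc : c j = Real.log ss - Real.log (xs j) := by linarith [hlogxs j]
        have hχl : Real.log (xs j / ss) = Real.log (xs j) - Real.log ss :=
          Real.log_div (ne_of_gt (hxs j)) (ne_of_gt hss0)
        have hnν : (n:ℝ) * ((ν j:ℝ)/(n:ℝ)) = (ν j:ℝ) := by field_simp
        rcases Nat.eq_zero_or_pos (ν j) with h0 | hpos
        · rw [h0]; simp
        · have hν0 : (0:ℝ) < (ν j:ℝ) := by exact_mod_cast hpos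
          have hl : Real.log ((ν j:ℝ)/(n:ℝ)) = Real.log (ν j:ℝ) - Real.log (n:ℝ) :=
            Real.log_div (ne_of_gt hν0) (ne_of_gt hN)
          rw [hc, hχl, hl,
            show (n:ℝ)*(((ν j:ℝ)/(n:ℝ)) * ((Real.log (ν j:ℝ) - Real.log (n:ℝ))
              - (Real.log (xs j) - Real.log ss)))
            = ((n:ℝ)*((ν j:ℝ)/(n:ℝ))) * ((Real.log (ν j:ℝ) - Real.log (n:ℝ))
              - (Real.log (xs j) - Real.log ss)) from by ring, hnν]
          ring
      have e1 : (∑ j, (ν j:ℝ) * c j) - (n:ℝ) * KL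
          = ∑ j, (-((ν j:ℝ) * Real.log (ν j:ℝ)) + (ν j:ℝ) * Real.log (n:ℝ)) := by
        rw [hKLdef, Finset.mul_sum, ← Finset.sum_sub_distrib]
        exact Finset.sum_congr rfl E
      have e2 : ∑ j, (-((ν j:ℝ) * Real.log (ν j:ℝ)) + (ν j:ℝ) * Real.log (n:ℝ))
          = -(∑ j, (ν j:ℝ) * Real.log (ν j:ℝ)) + (n:ℝ) * Real.log (n:ℝ) := by
        rw [Finset.sum_add_distrib, Finset.sum_neg_distrib, ← Finset.sum_mul, hsumν]
      unfold genEntropy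
      rw [hsumν, e1, e2]
    -- Pinsker
    have hPinsk := owPinsker (fun j => (ν j:ℝ)/(n:ℝ)) (fun j => xs j / ss)
      (fun j => by positivity) hχpos
      (by rw [← Finset.sum_div, hsumν]; exact div_self (ne_of_gt hN)) hχsum
      βs hβ0 hβhalf hβmax
    -- total-variation lower bound
    set T : ℝ := ∑ j, |(ν j:ℝ)/(n:ℝ) - xs j/ss| with hTdef
    have hT : ϑ < T := by
      have h1 : ∀ j, |(ν j:ℝ) - xs j| ≤ (n:ℝ) * |(ν j:ℝ)/(n:ℝ) - xs j/ss|
          + |(n:ℝ) - ss| * (xs j/ss) := by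
        intro j
        have e : (ν j:ℝ) - xs j
            = (n:ℝ)*((ν j:ℝ)/(n:ℝ) - xs j/ss) + ((n:ℝ) - ss)*(xs j/ss) := by
          field_simp
          ring
        rw [e]
        refine le_trans (abs_add_le _ _) ?_
        rw [abs_mul, abs_mul, abs_of_nonneg (le_of_lt hN),
          abs_of_nonneg (le_of_lt (hχpos j))]
      have h2 : ∀ j, |(ν j:ℝ) - xs j| ≤ ss * |(ν j:ℝ)/(n:ℝ) - xs j/ss|
          + |(n:ℝ) - ss| * ((ν j:ℝ)/(n:ℝ)) := by
        intro j
        have e : (ν j:ℝ) - xs j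
            = ss*((ν j:ℝ)/(n:ℝ) - xs j/ss) + ((n:ℝ) - ss)*((ν j:ℝ)/(n:ℝ)) := by
          field_simp
          ring
        rw [e]
        refine le_trans (abs_add_le _ _) ?_
        rw [abs_mul, abs_mul, abs_of_nonneg (le_of_lt hss0),
          abs_of_nonneg (by positivity : (0:ℝ) ≤ (ν j:ℝ)/(n:ℝ))]
      have hs1 : ∑ i, |(ν i:ℝ) - xs i| ≤ (n:ℝ) * T + |(n:ℝ) - ss| := by
        calc ∑ i, |(ν i:ℝ) - xs i|
            ≤ ∑ i, ((n:ℝ) * |(ν i:ℝ)/(n:ℝ) - xs i/ss| + |(n:ℝ) - ss| * (xs i/ss)) :=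
              Finset.sum_le_sum (fun i _ => h1 i)
          _ = (n:ℝ) * T + |(n:ℝ) - ss| := by
              rw [Finset.sum_add_distrib, ← Finset.mul_sum, ← Finset.mul_sum, hχsum,
                hTdef, mul_one]
      have hs2 : ∑ i, |(ν i:ℝ) - xs i| ≤ ss * T + |(n:ℝ) - ss| := by
        calc ∑ i, |(ν i:ℝ) - xs i|
            ≤ ∑ i, (ss * |(ν i:ℝ)/(n:ℝ) - xs i/ss| + |(n:ℝ) - ss| * ((ν i:ℝ)/(n:ℝ))) :=
              Finset.sum_le_sum (fun i _ => h2 i)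
          _ = ss * T + |(n:ℝ) - ss| := by
              rw [Finset.sum_add_distrib, ← Finset.mul_sum, ← Finset.mul_sum,
                ← Finset.sum_div, hsumν, div_self (ne_of_gt hN), hTdef, mul_one]
      rcases le_total ((n:ℝ)) ss with hmin | hmin
      · rw [min_eq_left hmin] at hL1
        have : (n:ℝ) * ϑ < (n:ℝ) * T := by linarith
        exact lt_of_mul_lt_mul_left (by linarith) (le_of_lt hN)
      · rw [min_eq_right hmin] at hL1
        have : ss * ϑ < ss * T := by linarith
        exact lt_of_mul_lt_mul_left (by linarith) (le_of_lt hss0)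
    have hT2 : ϑ^2 ≤ T^2 := pow_le_pow_left₀ (le_of_lt hϑ) (le_of_lt hT) 2
    have hγpos : (0:ℝ) ≤ γs := by linarith
    have hKLlb : γs * ϑ^2 ≤ KL := by
      have := mul_le_mul_of_nonneg_left hT2 hγpos
      rw [hγphi] at this ⊢
      calc owPhi βs / 4 * ϑ^2 ≤ owPhi βs / 4 * T^2 := this
        _ ≤ KL := hPinsk
    have hfin := mul_le_mul_of_nonneg_left hKLlb (le_of_lt hN)
    rw [hdecomp]
    nlinarith [hdual, hfin]
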